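/- Let A₀, Δ_A, Q be n×n real matrices with A := A₀ + Δ_A, let B be an n×m real matrix and R an m×m real matrix. Assume: Q and R are symmetric positive definite with Q − q·I_n ⪰ 0 for a real q > 0; ‖Δ_A‖ ≤ τ/s for reals τ ≥ 0 and s > 0; P̄₀ is a symmetric positive definite n×n matrix satisfying the nominal algebraic Riccati equation A₀ᵀ P̄₀ + P̄₀ A₀ + Q − P̄₀ B R⁻¹ Bᵀ P̄₀ = 0; K̄₀ := −R⁻¹ Bᵀ P̄₀; and τ < q·s/(2·tr(P̄₀)). Set ζ := q·s/(q·s − 2τ·tr(P̄₀)). Then: (i) A + B K̄₀ is Hurwitz (every eigenvalue of its complexification has strictly negative real part); and (ii) for every symmetric positive semidefinite n×n matrix W satisfying (A + B K̄₀) W + W (A + B K̄₀)ᵀ + I_n = 0, tr((Q + K̄₀ᵀ R K̄₀) W) ≤ ζ·tr(P̄₀). -/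

import Mathlib

open Matrix
open scoped Matrix.Norms.L2Operator

open scoped MatrixOrder in
noncomputable def Matrix.PosSemidef.sqrt {N : ℕ} {A : Matrix (Fin N) (Fin N) ℝ}
    (_hA : A.PosSemidef) : Matrix (Fin N) (Fin N) ℝ := CFC.sqrt A

open scoped MatrixOrder in
lemma Matrix.PosSemidef.posSemidef_sqrt {N : ℕ} {A : Matrix (Fin N) (Fin N) ℝ}
    (hA : A.PosSemidef) : hA.sqrt.PosSemidef := (CFC.sqrt_nonneg A).posSemidef

open scoped MatrixOrder in
lemma Matrix.PosSemidef.sq_sqrt {N : ℕ} {A : Matrix (Fin N) (Fin N) ℝ}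
    (hA : A.PosSemidef) : hA.sqrt ^ 2 = A := CFC.sq_sqrt A hA.nonneg

namespace CEaux

lemma isHermitian_of_symm {N : ℕ} {A : Matrix (Fin N) (Fin N) ℝ} (h : Aᵀ = A) :
    A.IsHermitian := by
  rwa [Matrix.IsHermitian, Matrix.conjTranspose_eq_transpose_of_trivial]

lemma symm_of_isHermitian {N : ℕ} {A : Matrix (Fin N) (Fin N) ℝ} (h : A.IsHermitian) : Aᵀ = A := by
  rwa [Matrix.IsHermitian, Matrix.conjTranspose_eq_transpose_of_trivial] at h

lemma psd_quad {N : ℕ} {A : Matrix (Fin N) (Fin N) ℝ} (h : A.PosSemidef) (x : Fin N → ℝ) :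
    0 ≤ x ⬝ᵥ (A *ᵥ x) := by simpa using h.dotProduct_mulVec_nonneg x

lemma pd_quad {N : ℕ} {A : Matrix (Fin N) (Fin N) ℝ} (h : A.PosDef) {x : Fin N → ℝ}
    (hx : x ≠ 0) : 0 < x ⬝ᵥ (A *ᵥ x) := by simpa using h.dotProduct_mulVec_pos hx

lemma trace_nonneg {N : ℕ} {A : Matrix (Fin N) (Fin N) ℝ} (h : A.PosSemidef) : 0 ≤ A.trace := by
  rw [Matrix.trace]
  refine Finset.sum_nonneg fun i _ => ?_
  have := psd_quad h (Pi.single i 1)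
  simpa [dotProduct, Matrix.mulVec_single, Pi.single_apply] using this

lemma trace_mul_nonneg {N : ℕ} {A B : Matrix (Fin N) (Fin N) ℝ} (hA : A.PosSemidef)
    (hB : B.PosSemidef) : 0 ≤ (A * B).trace := by
  have hs := hA.posSemidef_sqrt
  have h1 : A = hA.sqrt * hA.sqrt := by rw [← pow_two, hA.sq_sqrt]
  have h2 : (hA.sqrt * B * hA.sqrt).PosSemidef := by
    have := hB.mul_mul_conjTranspose_same hA.sqrt
    rwa [hs.1.eq] at this
  have h3 : (0:ℝ) ≤ (hA.sqrt * B * hA.sqrt).trace := trace_nonneg h2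
  rwa [Matrix.trace_mul_cycle, ← h1] at h3

lemma dotProduct_self_nonneg {N : ℕ} (x : Fin N → ℝ) : 0 ≤ x ⬝ᵥ x :=
  Finset.sum_nonneg fun i _ => mul_self_nonneg _

lemma quad_le_trace {N : ℕ} {P : Matrix (Fin N) (Fin N) ℝ} (hP : P.PosSemidef) (x : Fin N → ℝ) :
    x ⬝ᵥ (P *ᵥ x) ≤ P.trace * (x ⬝ᵥ x) := by
  set s := hP.sqrt with hsdef
  have hsh : sᵀ = s := symm_of_isHermitian hP.posSemidef_sqrt.1
  have h1 : P = s * s := by rw [hsdef, ← pow_two, hP.sq_sqrt]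
  have hquad : x ⬝ᵥ (P *ᵥ x) = (s *ᵥ x) ⬝ᵥ (s *ᵥ x) := by
    rw [h1, ← Matrix.mulVec_mulVec, Matrix.dotProduct_mulVec, ← Matrix.vecMul_transpose, hsh]
  have hsym : ∀ i j, s j i = s i j := fun i j => by
    rw [show s j i = sᵀ i j from rfl, hsh]
  have htr : P.trace = ∑ i, ∑ j, (s i j)^2 := by
    rw [h1, Matrix.trace]
    refine Finset.sum_congr rfl fun i _ => ?_
    simp only [Matrix.diag_apply, Matrix.mul_apply, pow_two]
    exact Finset.sum_congr rfl fun j _ => by rw [hsym i j]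
  have key : ∀ i, (s *ᵥ x) i ^ 2 ≤ (∑ j, (s i j)^2) * (x ⬝ᵥ x) := fun i => by
    have := Finset.sum_mul_sq_le_sq_mul_sq Finset.univ (fun j => s i j) x
    simpa [Matrix.mulVec, dotProduct, pow_two] using this
  have e1 : (s *ᵥ x) ⬝ᵥ (s *ᵥ x) = ∑ i, (s *ᵥ x) i ^2 := by
    simp [dotProduct, pow_two]
  rw [hquad, htr, e1, Finset.sum_mul]
  exact Finset.sum_le_sum fun i _ => key i

lemma mulVec_sq_le {N : ℕ} {P : Matrix (Fin N) (Fin N) ℝ} (hP : P.PosSemidef) (x : Fin N → ℝ) :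
    (P *ᵥ x) ⬝ᵥ (P *ᵥ x) ≤ P.trace^2 * (x ⬝ᵥ x) := by
  have hPh := symm_of_isHermitian hP.1
  have htqnn := trace_nonneg hP
  have htI : (P.trace • (1:Matrix (Fin N) (Fin N) ℝ) - P).PosSemidef := by
    refine Matrix.PosSemidef.of_dotProduct_mulVec_nonneg ?_ ?_
    · exact isHermitian_of_symm (by rw [Matrix.transpose_sub, Matrix.transpose_smul,
        Matrix.transpose_one, hPh])
    · intro y
      have h := quad_le_trace hP y
      simp only [star_trivial, Matrix.sub_mulVec, Matrix.smul_mulVec, Matrix.one_mulVec,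
        dotProduct_sub, dotProduct_smul, smul_eq_mul]
      linarith
  set s := hP.sqrt with hsdef
  have h1 : P = s * s := by rw [hsdef, ← pow_two, hP.sq_sqrt]
  have h2 : (s * (P.trace • (1:Matrix (Fin N) (Fin N) ℝ) - P) * s).PosSemidef := by
    have := htI.mul_mul_conjTranspose_same s
    rwa [hP.posSemidef_sqrt.1.eq] at this
  have h3 : s * (P.trace • (1:Matrix (Fin N) (Fin N) ℝ) - P) * s
      = P.trace • P - P * P := by
    rw [Matrix.mul_sub, Matrix.sub_mul, Matrix.mul_smul, Matrix.smul_mul, Matrix.mul_one]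
    congr 1
    · rw [h1]
    · rw [h1]; noncomm_ring
  rw [h3] at h2
  have h4 : x ⬝ᵥ ((P*P) *ᵥ x) ≤ P.trace * (x ⬝ᵥ (P *ᵥ x)) := by
    have h := psd_quad h2 x
    simp only [Matrix.sub_mulVec, Matrix.smul_mulVec, dotProduct_sub,
      dotProduct_smul, smul_eq_mul] at h
    linarith
  have hswap : ∀ y : Fin N → ℝ, x ⬝ᵥ (P *ᵥ y) = (P *ᵥ x) ⬝ᵥ y := fun y => by
    rw [Matrix.dotProduct_mulVec]
    congr 1
    conv_lhs => rw [← hPh]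
    rw [Matrix.vecMul_transpose]
  have h5 : (P *ᵥ x) ⬝ᵥ (P *ᵥ x) = x ⬝ᵥ ((P*P) *ᵥ x) := by
    rw [← Matrix.mulVec_mulVec, hswap]
  have h6 := quad_le_trace hP x
  calc (P *ᵥ x) ⬝ᵥ (P *ᵥ x) = x ⬝ᵥ ((P*P) *ᵥ x) := h5
    _ ≤ P.trace * (x ⬝ᵥ (P *ᵥ x)) := h4
    _ ≤ P.trace * (P.trace * (x ⬝ᵥ x)) := mul_le_mul_of_nonneg_left h6 htqnn
    _ = P.trace^2 * (x ⬝ᵥ x) := by ring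

lemma dot_eq_inner {N : ℕ} (a b : Fin N → ℝ) :
    a ⬝ᵥ b = inner ℝ ((WithLp.equiv 2 (Fin N → ℝ)).symm a) ((WithLp.equiv 2 (Fin N → ℝ)).symm b) := by
  simp [PiLp.inner_apply, RCLike.inner_apply, dotProduct, mul_comm]

lemma norm_sq_eq_dot {N : ℕ} (a : Fin N → ℝ) :
    ‖(WithLp.equiv 2 (Fin N → ℝ)).symm a‖^2 = a ⬝ᵥ a := by
  rw [← real_inner_self_eq_norm_sq, ← dot_eq_inner]

lemma opnorm_mulVec {M N : ℕ} (A : Matrix (Fin M) (Fin N) ℝ) (x : Fin N → ℝ) :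
    ‖(WithLp.equiv 2 (Fin M → ℝ)).symm (A *ᵥ x)‖
      ≤ ‖A‖ * ‖(WithLp.equiv 2 (Fin N → ℝ)).symm x‖ :=
  Matrix.l2_opNorm_mulVec A ((WithLp.equiv 2 (Fin N → ℝ)).symm x)

lemma quad_bound_S {N : ℕ} {ΔA P : Matrix (Fin N) (Fin N) ℝ} (hP : P.PosSemidef)
    (hPh : Pᵀ = P) {c : ℝ} (hc : 0 ≤ c) (hΔ : ‖ΔA‖ ≤ c) (x : Fin N → ℝ) :
    x ⬝ᵥ ((ΔAᵀ * P + P * ΔA) *ᵥ x) ≤ 2 * c * P.trace * (x ⬝ᵥ x) := by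
  have htnn := trace_nonneg hP
  have e1 : x ⬝ᵥ ((ΔAᵀ * P) *ᵥ x) = (ΔA *ᵥ x) ⬝ᵥ (P *ᵥ x) := by
    rw [← Matrix.mulVec_mulVec, Matrix.dotProduct_mulVec, Matrix.vecMul_transpose]
  have e2 : x ⬝ᵥ ((P * ΔA) *ᵥ x) = (ΔA *ᵥ x) ⬝ᵥ (P *ᵥ x) := by
    rw [← Matrix.mulVec_mulVec, Matrix.dotProduct_mulVec]
    conv_lhs => rw [← hPh]
    rw [Matrix.vecMul_transpose, dotProduct_comm]
  have e0 : x ⬝ᵥ ((ΔAᵀ * P + P * ΔA) *ᵥ x) = 2 * ((ΔA *ᵥ x) ⬝ᵥ (P *ᵥ x)) := by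
    rw [Matrix.add_mulVec, dotProduct_add, e1, e2]; ring
  rw [e0]
  set ex := (WithLp.equiv 2 (Fin N → ℝ)).symm x with hex
  have hxnn : (0:ℝ) ≤ ‖ex‖ := norm_nonneg _
  have hPx : ‖(WithLp.equiv 2 (Fin N → ℝ)).symm (P *ᵥ x)‖ ≤ P.trace * ‖ex‖ := by
    have hsq : ‖(WithLp.equiv 2 (Fin N → ℝ)).symm (P *ᵥ x)‖^2 ≤ (P.trace * ‖ex‖)^2 := by
      rw [norm_sq_eq_dot]
      calc (P *ᵥ x) ⬝ᵥ (P *ᵥ x) ≤ P.trace^2 * (x ⬝ᵥ x) := mulVec_sq_le hP x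
        _ = (P.trace * ‖ex‖)^2 := by rw [← norm_sq_eq_dot x, ← hex]; ring
    exact le_of_pow_le_pow_left₀ two_ne_zero (by positivity) hsq
  have hΔx : ‖(WithLp.equiv 2 (Fin N → ℝ)).symm (ΔA *ᵥ x)‖ ≤ c * ‖ex‖ := by
    refine (opnorm_mulVec ΔA x).trans ?_
    exact mul_le_mul_of_nonneg_right hΔ hxnn
  have hCS : (ΔA *ᵥ x) ⬝ᵥ (P *ᵥ x)
      ≤ ‖(WithLp.equiv 2 (Fin N → ℝ)).symm (ΔA *ᵥ x)‖
        * ‖(WithLp.equiv 2 (Fin N → ℝ)).symm (P *ᵥ x)‖ := by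
    rw [dot_eq_inner]
    exact real_inner_le_norm _ _
  have hfin : (ΔA *ᵥ x) ⬝ᵥ (P *ᵥ x) ≤ (c * ‖ex‖) * (P.trace * ‖ex‖) := by
    refine hCS.trans ?_
    exact mul_le_mul hΔx hPx (norm_nonneg _) (by positivity)
  have hx2 : ‖ex‖^2 = x ⬝ᵥ x := norm_sq_eq_dot x
  have heq : c * ‖ex‖ * (P.trace * ‖ex‖) = c * P.trace * (x ⬝ᵥ x) := by
    rw [← hx2]; ring
  linarith

lemma dot_complex {N : ℕ} {M : Matrix (Fin N) (Fin N) ℝ} (hM : Mᵀ = M) (v : Fin N → ℂ) :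
    star v ⬝ᵥ ((M.map Complex.ofReal) *ᵥ v)
      = ((((fun i => (v i).re) ⬝ᵥ (M *ᵥ fun i => (v i).re))
          + ((fun i => (v i).im) ⬝ᵥ (M *ᵥ fun i => (v i).im)) : ℝ) : ℂ) := by
  have hMs : ∀ i j, M j i = M i j := fun i j => by
    rw [show M j i = Mᵀ i j from rfl, hM]
  have expand : star v ⬝ᵥ ((M.map Complex.ofReal) *ᵥ v)
      = ∑ i, ∑ j, (starRingEnd ℂ) (v i) * ((M i j : ℂ) * v j) := by
    simp [dotProduct, Matrix.mulVec, Finset.mul_sum, Matrix.map_apply, RCLike.star_def]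
  rw [expand]
  apply Complex.ext
  · rw [Complex.re_sum]
    simp only [Complex.ofReal_add, Complex.add_re, Complex.ofReal_re, Complex.add_im]
    simp only [dotProduct, Matrix.mulVec, Finset.mul_sum]
    rw [← Finset.sum_add_distrib]
    refine Finset.sum_congr rfl fun i _ => ?_
    rw [Complex.re_sum, ← Finset.sum_add_distrib]
    refine Finset.sum_congr rfl fun j _ => ?_
    simp only [Complex.mul_re, Complex.mul_im, Complex.conj_re, Complex.conj_im,
      Complex.ofReal_re, Complex.ofReal_im]
    ring
  · rw [Complex.im_sum]
    simp only [Complex.ofReal_im]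
    have hterm : ∀ i j, ((starRingEnd ℂ) (v i) * ((M i j : ℂ) * v j)).im
        = M i j * ((v i).re * (v j).im - (v i).im * (v j).re) := by
      intro i j
      simp only [Complex.mul_re, Complex.mul_im, Complex.conj_re, Complex.conj_im,
        Complex.ofReal_re, Complex.ofReal_im]
      ring
    have hconv : ∑ i, ∑ j, ((starRingEnd ℂ) (v i) * ((M i j : ℂ) * v j)).im
        = ∑ i, ∑ j, M i j * ((v i).re * (v j).im - (v i).im * (v j).re) :=
      Finset.sum_congr rfl fun i _ => Finset.sum_congr rfl fun j _ => hterm i j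
    rw [show ∑ i, (∑ j, (starRingEnd ℂ) (v i) * ((M i j : ℂ) * v j)).im
        = ∑ i, ∑ j, ((starRingEnd ℂ) (v i) * ((M i j : ℂ) * v j)).im from
      Finset.sum_congr rfl fun i _ => Complex.im_sum _ _, hconv]
    have hanti : ∑ i, ∑ j, M i j * ((v i).re * (v j).im - (v i).im * (v j).re)
        = - ∑ i, ∑ j, M i j * ((v i).re * (v j).im - (v i).im * (v j).re) := by
      conv_lhs => rw [Finset.sum_comm]
      rw [← Finset.sum_neg_distrib]
      refine Finset.sum_congr rfl fun i _ => ?_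
      rw [← Finset.sum_neg_distrib]
      refine Finset.sum_congr rfl fun j _ => ?_
      rw [hMs i j]
      ring
    linarith [hanti]

end CEaux


/-- A real square matrix is Hurwitz if every eigenvalue of its complexification
has strictly negative real part. -/
def Matrix.IsHurwitz {n : ℕ} (A : Matrix (Fin n) (Fin n) ℝ) : Prop :=
  ∀ μ ∈ spectrum ℂ (A.map (Complex.ofReal)), μ.re < 0

set_option maxHeartbeats 1600000 in
/-- Proposition 2: robustness of the certainty-equivalence LQR controller to
measurement noise: the gain `K̄₀` stabilizes the true system `A = A₀ + Δ_A`
and the LQR cost satisfies `tr((Q + K̄₀ᵀ R K̄₀) W) ≤ ζ tr(P̄₀)`. -/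
theorem certainty_equivalence_lqr_robust_noise {n m : ℕ}
    (A₀ ΔA Q : Matrix (Fin n) (Fin n) ℝ)
    (B : Matrix (Fin n) (Fin m) ℝ)
    (R : Matrix (Fin m) (Fin m) ℝ)
    (q : ℝ) (hq : 0 < q)
    (hQ : Q.PosDef) (hR : R.PosDef)
    (hQq : (Q - q • (1 : Matrix (Fin n) (Fin n) ℝ)).PosSemidef)
    (τ s : ℝ) (hτ : 0 ≤ τ) (hs : 0 < s) (hΔA : ‖ΔA‖ ≤ τ / s)
    (P₀ : Matrix (Fin n) (Fin n) ℝ) (hP₀ : P₀.PosDef)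
    (hARE : A₀ᵀ * P₀ + P₀ * A₀ + Q - P₀ * B * R⁻¹ * Bᵀ * P₀ = 0)
    (K₀ : Matrix (Fin m) (Fin n) ℝ) (hK₀ : K₀ = -(R⁻¹ * Bᵀ * P₀))
    (hτsmall : τ < q * s / (2 * P₀.trace))
    (ζ : ℝ) (hζ : ζ = q * s / (q * s - 2 * τ * P₀.trace)) :
    ((A₀ + ΔA) + B * K₀).IsHurwitz ∧
      ∀ W : Matrix (Fin n) (Fin n) ℝ, W.PosSemidef →
        ((A₀ + ΔA) + B * K₀) * W + W * ((A₀ + ΔA) + B * K₀)ᵀ + 1 = 0 →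
        ((Q + K₀ᵀ * R * K₀) * W).trace ≤ ζ * P₀.trace := by
  subst hζ
  -- degenerate case n = 0
  rcases Nat.eq_zero_or_pos n with hn | hn
  · exfalso
    have h0 : P₀.trace = 0 := by
      subst hn
      simp [Matrix.trace]
    rw [h0] at hτsmall
    norm_num at hτsmall
    linarith
  have htrP : 0 < P₀.trace := by
    have hne : Nonempty (Fin n) := ⟨⟨0, hn⟩⟩
    rw [Matrix.trace]
    refine Finset.sum_pos (fun i _ => ?_) Finset.univ_nonempty
    have hsingle : (Pi.single i 1 : Fin n → ℝ) ≠ 0 := by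
      intro h
      have := congrFun h i
      simp at this
    have := CEaux.pd_quad hP₀ hsingle
    simpa [dotProduct, Matrix.mulVec_single, Pi.single_apply] using this
  have hDpos : 0 < q * s - 2 * τ * P₀.trace := by
    have h2 : 0 < 2 * P₀.trace := by linarith
    rw [lt_div_iff₀ h2] at hτsmall
    nlinarith
  -- symmetry and invertibility facts
  have hPs : P₀ᵀ = P₀ := CEaux.symm_of_isHermitian hP₀.1
  have hQs : Qᵀ = Q := CEaux.symm_of_isHermitian hQ.1
  have hRs : Rᵀ = R := CEaux.symm_of_isHermitian hR.1
  have hRdet : IsUnit R.det := isUnit_iff_ne_zero.mpr (ne_of_gt hR.det_pos)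
  have hRinvs : R⁻¹ᵀ = R⁻¹ := by rw [Matrix.transpose_nonsing_inv, hRs]
  have hRRinv : R * R⁻¹ = 1 := Matrix.mul_nonsing_inv R hRdet
  have hKt : K₀ᵀ = -(P₀ * B * R⁻¹) := by
    rw [hK₀]
    simp only [Matrix.transpose_neg, Matrix.transpose_mul, Matrix.transpose_transpose,
      hRinvs, hPs, Matrix.mul_assoc]
  have hKRK : K₀ᵀ * R * K₀ = P₀ * B * R⁻¹ * Bᵀ * P₀ := by
    rw [hKt, hK₀]
    have hmid : R * (R⁻¹ * (Bᵀ * P₀)) = Bᵀ * P₀ := by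
      rw [← Matrix.mul_assoc, hRRinv, Matrix.one_mul]
    simp only [Matrix.neg_mul, Matrix.mul_neg, neg_neg, Matrix.mul_assoc, hmid]
  set S := ΔAᵀ * P₀ + P₀ * ΔA with hSdef
  set Acl := A₀ + ΔA + B * K₀ with hAcldef
  -- Lyapunov identity
  have h1 : A₀ᵀ * P₀ + P₀ * A₀ + Q = P₀ * B * R⁻¹ * Bᵀ * P₀ := sub_eq_zero.mp hARE
  have hBK : P₀ * (B * K₀) = -(P₀ * B * R⁻¹ * Bᵀ * P₀) := by
    rw [hK₀]
    simp only [Matrix.mul_neg, Matrix.mul_assoc]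
  have hKB : K₀ᵀ * Bᵀ * P₀ = -(P₀ * B * R⁻¹ * Bᵀ * P₀) := by
    rw [hKt]
    simp only [Matrix.neg_mul, Matrix.mul_assoc]
  have hLyap : Aclᵀ * P₀ + P₀ * Acl = -(Q + K₀ᵀ * R * K₀ - S) := by
    rw [hAcldef, hSdef, hKRK]
    simp only [Matrix.transpose_add, Matrix.add_mul, Matrix.mul_add, Matrix.transpose_mul]
    rw [hKB, hBK]
    have h2 : A₀ᵀ * P₀ = P₀ * B * R⁻¹ * Bᵀ * P₀ - Q - P₀ * A₀ := by
      rw [← h1]; abel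
    rw [h2]; abel
  -- positive definiteness of M = Q + K₀ᵀRK₀ - S
  have hKRKpsd : (K₀ᵀ * R * K₀).PosSemidef := by
    have := hR.posSemidef.conjTranspose_mul_mul_same K₀
    rwa [Matrix.conjTranspose_eq_transpose_of_trivial] at this
  have hτs : (0:ℝ) ≤ τ / s := div_nonneg hτ hs.le
  have hSquad : ∀ x : Fin n → ℝ, x ⬝ᵥ (S *ᵥ x) ≤ 2 * (τ/s) * P₀.trace * (x ⬝ᵥ x) := fun x => by
    rw [hSdef]
    exact CEaux.quad_bound_S hP₀.posSemidef hPs hτs hΔA x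
  have hSsym : Sᵀ = S := by
    rw [hSdef, Matrix.transpose_add]
    simp only [Matrix.transpose_mul, Matrix.transpose_transpose, hPs]
    exact add_comm _ _
  have hKRKsym : (K₀ᵀ * R * K₀)ᵀ = K₀ᵀ * R * K₀ := by
    simp only [Matrix.transpose_mul, Matrix.transpose_transpose, hRs, Matrix.mul_assoc]
  have hcoef : 2 * (τ/s) * P₀.trace < q := by
    have heq : 2 * (τ/s) * P₀.trace = 2 * τ * P₀.trace / s := by ring
    rw [heq, div_lt_iff₀ hs]
    nlinarith
  have hMpd : (Q + K₀ᵀ * R * K₀ - S).PosDef := by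
    refine Matrix.PosDef.of_dotProduct_mulVec_pos ?_ ?_
    · apply CEaux.isHermitian_of_symm
      rw [Matrix.transpose_sub, Matrix.transpose_add, hQs, hKRKsym, hSsym]
    · intro x hx
      have hxx : 0 < x ⬝ᵥ x := by
        rcases lt_or_eq_of_le (CEaux.dotProduct_self_nonneg x) with h | h
        · exact h
        · exact absurd (dotProduct_self_eq_zero.mp h.symm) hx
      have hQx : q * (x ⬝ᵥ x) ≤ x ⬝ᵥ (Q *ᵥ x) := by
        have := CEaux.psd_quad hQq x
        simp only [Matrix.sub_mulVec, Matrix.smul_mulVec, Matrix.one_mulVec,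
          dotProduct_sub, dotProduct_smul, smul_eq_mul] at this
        linarith
      have hKx : 0 ≤ x ⬝ᵥ ((K₀ᵀ * R * K₀) *ᵥ x) := CEaux.psd_quad hKRKpsd x
      have hSx := hSquad x
      simp only [star_trivial, Matrix.sub_mulVec, Matrix.add_mulVec, dotProduct_sub,
        dotProduct_add]
      nlinarith [mul_pos (sub_pos.mpr hcoef) hxx]
  refine ⟨?_, ?_⟩
  · -- Hurwitz
    intro μ hμ
    rw [spectrum.mem_iff] at hμ
    have hdet : ((algebraMap ℂ (Matrix (Fin n) (Fin n) ℂ)) μ - Acl.map Complex.ofReal).det = 0 := by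
      by_contra h
      exact hμ ((Matrix.isUnit_iff_isUnit_det _).mpr (isUnit_iff_ne_zero.mpr h))
    obtain ⟨v, hv0, hv⟩ := (Matrix.exists_mulVec_eq_zero_iff).mpr hdet
    have heig : (Acl.map Complex.ofReal) *ᵥ v = μ • v := by
      rw [Algebra.algebraMap_eq_smul_one, Matrix.sub_mulVec, Matrix.smul_mulVec,
        Matrix.one_mulVec, sub_eq_zero] at hv
      exact hv.symm
    have hxy : (fun i => (v i).re) ≠ (0 : Fin n → ℝ) ∨ (fun i => (v i).im) ≠ (0 : Fin n → ℝ) := by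
      by_contra h
      push_neg at h
      apply hv0
      funext i
      have h1 := congrFun h.1 i
      have h2 := congrFun h.2 i
      exact Complex.ext (by simpa using h1) (by simpa using h2)
    have hquadpos : ∀ {T : Matrix (Fin n) (Fin n) ℝ}, T.PosDef →
        0 < ((fun i => (v i).re) ⬝ᵥ (T *ᵥ fun i => (v i).re))
            + ((fun i => (v i).im) ⬝ᵥ (T *ᵥ fun i => (v i).im)) := by
      intro T hT
      rcases hxy with h | h
      · have h1 := CEaux.pd_quad hT h
        have h2 := CEaux.psd_quad hT.posSemidef (fun i => (v i).im)
        linarith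
      · have h1 := CEaux.pd_quad hT h
        have h2 := CEaux.psd_quad hT.posSemidef (fun i => (v i).re)
        linarith
    have ha := hquadpos hP₀
    have hb := hquadpos hMpd
    have hP₀z := CEaux.dot_complex hPs v
    have hMz := CEaux.dot_complex (CEaux.symm_of_isHermitian hMpd.1) v
    -- Lyapunov over ℂ
    have hmm : (Aclᵀ * P₀ + P₀ * Acl).map Complex.ofReal
        = (Acl.map Complex.ofReal)ᵀ * (P₀.map Complex.ofReal)
          + (P₀.map Complex.ofReal) * (Acl.map Complex.ofReal) := by
      have h₁ : (Aclᵀ * P₀ + P₀ * Acl).map Complex.ofReal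
          = (Aclᵀ.map Complex.ofReal) * (P₀.map Complex.ofReal)
            + (P₀.map Complex.ofReal) * (Acl.map Complex.ofReal) := by
        show Complex.ofRealHom.mapMatrix (Aclᵀ * P₀ + P₀ * Acl)
          = Complex.ofRealHom.mapMatrix Aclᵀ * Complex.ofRealHom.mapMatrix P₀
            + Complex.ofRealHom.mapMatrix P₀ * Complex.ofRealHom.mapMatrix Acl
        rw [map_add Complex.ofRealHom.mapMatrix, _root_.map_mul, _root_.map_mul]
      rw [h₁, Matrix.transpose_map]
    have hstar : (Acl.map Complex.ofReal) *ᵥ star v = star ((Acl.map Complex.ofReal) *ᵥ v) := by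
      funext i
      simp only [Matrix.mulVec, dotProduct, Pi.star_apply, Matrix.map_apply, RCLike.star_def]
      rw [map_sum]
      exact Finset.sum_congr rfl fun j _ => by rw [_root_.map_mul, Complex.conj_ofReal]
    have hp1 : star v ⬝ᵥ (((Acl.map Complex.ofReal)ᵀ * (P₀.map Complex.ofReal)) *ᵥ v)
        = (starRingEnd ℂ) μ * (star v ⬝ᵥ ((P₀.map Complex.ofReal) *ᵥ v)) := by
      rw [← Matrix.mulVec_mulVec, Matrix.dotProduct_mulVec, Matrix.vecMul_transpose, hstar,
        heig, star_smul, smul_dotProduct]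
      simp [RCLike.star_def]
    have hp2 : star v ⬝ᵥ (((P₀.map Complex.ofReal) * (Acl.map Complex.ofReal)) *ᵥ v)
        = μ * (star v ⬝ᵥ ((P₀.map Complex.ofReal) *ᵥ v)) := by
      rw [← Matrix.mulVec_mulVec, heig, Matrix.mulVec_smul, dotProduct_smul, smul_eq_mul]
    have hneg : (Aclᵀ * P₀ + P₀ * Acl).map Complex.ofReal
        = -((Q + K₀ᵀ * R * K₀ - S).map Complex.ofReal) := by
      rw [hLyap]
      show Complex.ofRealHom.mapMatrix (-(Q + K₀ᵀ * R * K₀ - S)) = _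
      rw [map_neg]
      rfl
    have hmain : ((starRingEnd ℂ) μ + μ) * (star v ⬝ᵥ ((P₀.map Complex.ofReal) *ᵥ v))
        = -(star v ⬝ᵥ (((Q + K₀ᵀ * R * K₀ - S).map Complex.ofReal) *ᵥ v)) := by
      rw [add_mul, ← hp1, ← hp2]
      calc star v ⬝ᵥ (((Acl.map Complex.ofReal)ᵀ * (P₀.map Complex.ofReal)) *ᵥ v)
            + star v ⬝ᵥ (((P₀.map Complex.ofReal) * (Acl.map Complex.ofReal)) *ᵥ v)
          = star v ⬝ᵥ (((Aclᵀ * P₀ + P₀ * Acl).map Complex.ofReal) *ᵥ v) := by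
            rw [hmm, Matrix.add_mulVec, dotProduct_add]
        _ = -(star v ⬝ᵥ (((Q + K₀ᵀ * R * K₀ - S).map Complex.ofReal) *ᵥ v)) := by
            rw [hneg, Matrix.neg_mulVec, dotProduct_neg]
    rw [hP₀z, hMz] at hmain
    have hconj : ((starRingEnd ℂ) μ + μ) = ((2 * μ.re : ℝ) : ℂ) := by
      rw [add_comm, Complex.add_conj]
    rw [hconj, ← Complex.ofReal_mul, ← Complex.ofReal_neg] at hmain
    have hreal := Complex.ofReal_inj.mp hmain
    nlinarith [hreal, ha, hb]
  · -- cost bound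
    intro W hW hWeq
    have hWeq' : Acl * W + W * Aclᵀ = -1 := eq_neg_of_add_eq_zero_left hWeq
    have htr1 : ((Q + K₀ᵀ * R * K₀ - S) * W).trace = P₀.trace := by
      have hMz : (Q + K₀ᵀ * R * K₀ - S) = -(Aclᵀ * P₀ + P₀ * Acl) := by
        rw [hLyap, neg_neg]
      rw [hMz]
      simp only [Matrix.neg_mul, Matrix.trace_neg, Matrix.add_mul, Matrix.trace_add]
      have e1 : (Aclᵀ * P₀ * W).trace = (P₀ * (W * Aclᵀ)).trace := by
        rw [Matrix.trace_mul_cycle, Matrix.trace_mul_comm P₀ (W * Aclᵀ), Matrix.mul_assoc]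
      have e2 : (P₀ * Acl * W).trace = (P₀ * (Acl * W)).trace := by
        rw [Matrix.mul_assoc]
      rw [e1, e2, ← Matrix.trace_add, ← Matrix.mul_add]
      rw [show W * Aclᵀ + Acl * W = -1 from by rw [add_comm]; exact hWeq']
      simp
    have hSpsd_bound : ((2*(τ/s)*P₀.trace) • (1 : Matrix (Fin n) (Fin n) ℝ) - S).PosSemidef := by
      refine Matrix.PosSemidef.of_dotProduct_mulVec_nonneg ?_ ?_
      · apply CEaux.isHermitian_of_symm
        rw [Matrix.transpose_sub, Matrix.transpose_smul, Matrix.transpose_one, hSsym]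
      · intro y
        have := hSquad y
        simp only [star_trivial, Matrix.sub_mulVec, Matrix.smul_mulVec, Matrix.one_mulVec,
          dotProduct_sub, dotProduct_smul, smul_eq_mul]
        linarith
    have hSW : (S * W).trace ≤ (2*(τ/s)*P₀.trace) * W.trace := by
      have h0 := CEaux.trace_mul_nonneg hSpsd_bound hW
      rw [Matrix.sub_mul, Matrix.trace_sub, Matrix.smul_mul, Matrix.trace_smul,
        Matrix.one_mul] at h0
      simp only [smul_eq_mul] at h0
      linarith
    have hQW : q * W.trace ≤ ((Q + K₀ᵀ * R * K₀) * W).trace := by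
      have hpsd2 : ((Q + K₀ᵀ * R * K₀) - q • (1 : Matrix (Fin n) (Fin n) ℝ)).PosSemidef := by
        rw [show (Q + K₀ᵀ * R * K₀) - q • (1 : Matrix (Fin n) (Fin n) ℝ)
            = (Q - q • 1) + K₀ᵀ * R * K₀ from by abel]
        exact hQq.add hKRKpsd
      have h0 := CEaux.trace_mul_nonneg hpsd2 hW
      rw [Matrix.sub_mul, Matrix.trace_sub, Matrix.smul_mul, Matrix.trace_smul,
        Matrix.one_mul] at h0
      simp only [smul_eq_mul] at h0
      linarith
    have hWtr : 0 ≤ W.trace := CEaux.trace_nonneg hW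
    have hdecomp : ((Q + K₀ᵀ * R * K₀) * W).trace = P₀.trace + (S * W).trace := by
      have hsplit : ((Q + K₀ᵀ * R * K₀ - S) * W).trace
          = ((Q + K₀ᵀ * R * K₀) * W).trace - (S * W).trace := by
        rw [Matrix.sub_mul, Matrix.trace_sub]
      rw [hsplit] at htr1
      linarith
    -- final arithmetic
    have h1 : ((Q + K₀ᵀ * R * K₀) * W).trace ≤ P₀.trace + (2*(τ/s)*P₀.trace) * W.trace := by
      linarith
    have h4 := mul_le_mul_of_nonneg_right h1 (mul_pos hq hs).le
    have h5 := mul_le_mul_of_nonneg_left hQW (by positivity : (0:ℝ) ≤ 2 * τ * P₀.trace)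
    have e3 : (2*(τ/s)*P₀.trace) * W.trace * (q*s) = (2*τ*P₀.trace) * (q*W.trace) := by
      field_simp
    have key : ((Q + K₀ᵀ * R * K₀) * W).trace * (q*s - 2*τ*P₀.trace) ≤ q*s*P₀.trace := by
      nlinarith [h4, h5, e3]
    rw [div_mul_eq_mul_div, le_div_iff₀ hDpos]
    linarith
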